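/- Let G be a finite connected graph with edge weights w: E → ℝ, let S₀ be the edge set of a spanning tree of G, and for a ≥ 0 define modified weights by w_a(e) = w(e) − a if e ∈ S₀ and w_a(e) = w(e) otherwise (so that a minimum spanning tree of w_a is an α-stable MST with parameter a relative to S₀). Then for all 0 ≤ a ≤ a': (i) if e ∉ S₀ and e belongs to no minimum-total-weight spanning tree of G with respect to w_a, then e belongs to no minimum-total-weight spanning tree with respect to w_{a'}; and (ii) if e ∈ S₀ and e belongs to every minimum-total-weight spanning tree with respect to w_a, then e belongs to every minimum-total-weight spanning tree with respect to w_{a'}. Hence the stability–fit tradeoff for stable MST is monotone: sweeping a, each edge enters or leaves the α-stable MST at most once. -/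

import Mathlib

open SimpleGraph Finset

set_option linter.unusedSectionVars false
set_option maxHeartbeats 1000000

section StableMSTAux

variable {V : Type*} [Fintype V] [DecidableEq V]

private lemma stableMST_del_eq (B : Finset (Sym2 V)) (f : Sym2 V) :
    (SimpleGraph.fromEdgeSet (↑B : Set (Sym2 V))).deleteEdges {f}
      = SimpleGraph.fromEdgeSet (↑(B.erase f) : Set (Sym2 V)) := by
  ext u v
  simp only [SimpleGraph.deleteEdges_adj, SimpleGraph.fromEdgeSet_adj, Finset.coe_erase,
    Set.mem_diff, Set.mem_singleton_iff, Finset.mem_coe, Finset.mem_erase]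
  tauto

private lemma stableMST_reach_or {H : SimpleGraph V} {u v : V} :
    ∀ {b c : V}, H.Walk b c →
      ((H.deleteEdges {s(u,v)}).Reachable u b ∨ (H.deleteEdges {s(u,v)}).Reachable v b) →
      ((H.deleteEdges {s(u,v)}).Reachable u c ∨ (H.deleteEdges {s(u,v)}).Reachable v c) := by
  intro b c p
  induction p with
  | nil => exact id
  | @cons x y z hadj q ih =>
    intro hb
    apply ih
    by_cases hxy : s(x,y) = s(u,v)
    · rw [Sym2.eq_iff] at hxy
      rcases hxy with ⟨rfl, rfl⟩ | ⟨rfl, rfl⟩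
      · right; exact SimpleGraph.Reachable.refl _
      · left; exact SimpleGraph.Reachable.refl _
    · have hadj' : (H.deleteEdges {s(u,v)}).Adj x y :=
        SimpleGraph.deleteEdges_adj.mpr ⟨hadj, by simpa using hxy⟩
      rcases hb with hb | hb
      · left; exact hb.trans hadj'.reachable
      · right; exact hb.trans hadj'.reachable

private lemma stableMST_dart_split {H : SimpleGraph V} :
    ∀ {b c : V} (p : H.Walk b c), p.IsTrail → ∀ d : H.Dart, d ∈ p.darts →
      (H.deleteEdges {d.edge}).Reachable b d.fst ∧
        (H.deleteEdges {d.edge}).Reachable d.snd c := by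
  intro b c p
  induction p with
  | nil => intro _ d hd; simp [SimpleGraph.Walk.darts_nil] at hd
  | @cons x y z hadj q ih =>
    intro ht d hd
    rw [SimpleGraph.Walk.darts_cons, List.mem_cons] at hd
    rw [SimpleGraph.Walk.isTrail_cons] at ht
    rcases hd with rfl | hd
    · refine ⟨SimpleGraph.Reachable.refl _, ?_⟩
      refine ⟨q.toDeleteEdges _ fun e he hee => ?_⟩
      rw [Set.mem_singleton_iff] at hee
      subst hee
      exact ht.2 he
    · obtain ⟨h1, h2⟩ := ih ht.1 d hd
      have hed : d.edge ∈ q.edges := List.mem_map_of_mem hd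
      have hne : s(x,y) ≠ d.edge := fun hEq => ht.2 (hEq ▸ hed)
      have hadj' : (H.deleteEdges {d.edge}).Adj x y :=
        SimpleGraph.deleteEdges_adj.mpr ⟨hadj, by simpa using hne⟩
      exact ⟨hadj'.reachable.trans h1, h2⟩

private lemma stableMST_reach_del_of_reach {H : SimpleGraph V} {u v : V}
    (hvw : (H.deleteEdges {s(u,v)}).Reachable u v) :
    ∀ {b c : V}, H.Walk b c → (H.deleteEdges {s(u,v)}).Reachable b c := by
  intro b c p
  induction p with
  | nil => exact SimpleGraph.Reachable.refl _
  | @cons x y z hadj q ih =>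
    refine SimpleGraph.Reachable.trans ?_ ih
    by_cases hxy : s(x,y) = s(u,v)
    · rw [Sym2.eq_iff] at hxy
      rcases hxy with ⟨rfl, rfl⟩ | ⟨rfl, rfl⟩
      · exact hvw
      · exact hvw.symm
    · exact (SimpleGraph.deleteEdges_adj.mpr ⟨hadj, by simpa using hxy⟩).reachable

private lemma stableMST_exists_tree_le : ∀ (n : ℕ) (H : SimpleGraph V), H.edgeSet.ncard ≤ n →
    H.Connected → ∃ T, T ≤ H ∧ T.IsTree := by
  intro n
  induction n with
  | zero =>
    intro H hcard hconn
    refine ⟨H, le_refl _, hconn, ?_⟩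
    rw [SimpleGraph.isAcyclic_iff_forall_adj_isBridge]
    intro v w hadj
    exfalso
    have hne : H.edgeSet.Nonempty := ⟨s(v,w), hadj⟩
    have := Set.Nonempty.ncard_pos (hs := Set.toFinite _) hne
    omega
  | succ n ih =>
    intro H hcard hconn
    by_cases hac : H.IsAcyclic
    · exact ⟨H, le_refl _, hconn, hac⟩
    · rw [SimpleGraph.isAcyclic_iff_forall_adj_isBridge] at hac
      push_neg at hac
      obtain ⟨v, w, hadj, hnb⟩ := hac
      rw [SimpleGraph.isBridge_iff] at hnb
      push_neg at hnb
      have hreach : (H.deleteEdges {s(v,w)}).Reachable v w := hnb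
      have hconn' : (H.deleteEdges {s(v,w)}).Connected := by
        have hne : Nonempty V := hconn.nonempty
        refine SimpleGraph.Connected.mk fun a b => ?_
        obtain ⟨p⟩ := hconn.preconnected a b
        exact stableMST_reach_del_of_reach hreach p
      have hcard' : (H.deleteEdges {s(v,w)}).edgeSet.ncard ≤ n := by
        rw [SimpleGraph.edgeSet_deleteEdges]
        have hlt : (H.edgeSet \ {s(v,w)}).ncard < H.edgeSet.ncard :=
          Set.ncard_diff_singleton_lt_of_mem hadj (Set.toFinite _)
        omega
      obtain ⟨T, hle, hT⟩ := ih _ hcard' hconn'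
      exact ⟨T, hle.trans (SimpleGraph.deleteEdges_le _), hT⟩

private lemma stableMST_tree_ncard {H : SimpleGraph V} (hT : H.IsTree) :
    H.edgeSet.ncard + 1 = Fintype.card V := by
  haveI : Fintype ↥H.edgeSet := (Set.toFinite H.edgeSet).fintype
  have h1 := hT.card_edgeFinset
  rw [Set.ncard_eq_toFinset_card']
  exact h1

private lemma stableMST_tree_of_connected_card (H : SimpleGraph V) (hc : H.Connected)
    (hcard : H.edgeSet.ncard + 1 = Fintype.card V) : H.IsTree := by
  obtain ⟨T, hle, hT⟩ := stableMST_exists_tree_le H.edgeSet.ncard H le_rfl hc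
  have hsub : T.edgeSet ⊆ H.edgeSet := SimpleGraph.edgeSet_mono hle
  have hTcard := stableMST_tree_ncard hT
  have heq : T.edgeSet = H.edgeSet :=
    Set.eq_of_subset_of_ncard_le hsub (by omega) (Set.toFinite _)
  rwa [← SimpleGraph.edgeSet_inj.mp heq]

private lemma stableMST_good_edgeSet {B : Finset (Sym2 V)} (h : ∀ g ∈ B, ¬g.IsDiag) :
    (SimpleGraph.fromEdgeSet (↑B : Set (Sym2 V))).edgeSet = ↑B := by
  rw [SimpleGraph.edgeSet_fromEdgeSet]
  ext g
  simp only [Set.mem_diff, Finset.mem_coe, Set.mem_setOf_eq]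
  exact ⟨fun hg => hg.1, fun hg => ⟨hg, h g hg⟩⟩

private lemma stableMST_good_ncard {B : Finset (Sym2 V)} (h : ∀ g ∈ B, ¬g.IsDiag) :
    (SimpleGraph.fromEdgeSet (↑B : Set (Sym2 V))).edgeSet.ncard = B.card := by
  rw [stableMST_good_edgeSet h, Set.ncard_coe_finset]

private lemma stableMST_swap_tree (B : Finset (Sym2 V)) (hnd : ∀ g ∈ B, ¬g.IsDiag)
    (htree : (SimpleGraph.fromEdgeSet (↑B : Set (Sym2 V))).IsTree) {u v x y : V} (huv : u ≠ v)
    (he : s(u,v) ∉ B) (hf : s(x,y) ∈ B)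
    (hux : (SimpleGraph.fromEdgeSet (↑(B.erase s(x,y)) : Set (Sym2 V))).Reachable u x)
    (hvy : (SimpleGraph.fromEdgeSet (↑(B.erase s(x,y)) : Set (Sym2 V))).Reachable v y) :
    (SimpleGraph.fromEdgeSet (↑(insert s(u,v) (B.erase s(x,y))) : Set (Sym2 V))).IsTree := by
  set B' : Finset (Sym2 V) := insert s(u,v) (B.erase s(x,y)) with hB'
  have hnd' : ∀ g ∈ B', ¬g.IsDiag := by
    intro g hg
    rcases Finset.mem_insert.mp hg with rfl | hg
    · simpa [Sym2.mk_isDiag_iff] using huv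
    · exact hnd g (Finset.mem_of_mem_erase hg)
  have hcard : B'.card = B.card := by
    rw [hB', Finset.card_insert_of_notMem (fun hc => he (Finset.mem_of_mem_erase hc)),
      Finset.card_erase_of_mem hf]
    have : 1 ≤ B.card := Finset.card_pos.mpr ⟨_, hf⟩
    omega
  have hmono : SimpleGraph.fromEdgeSet (↑(B.erase s(x,y)) : Set (Sym2 V))
      ≤ SimpleGraph.fromEdgeSet (↑B' : Set (Sym2 V)) := by
    apply SimpleGraph.fromEdgeSet_mono
    intro g hg
    exact Finset.mem_insert_of_mem hg
  have hKuv : (SimpleGraph.fromEdgeSet (↑B' : Set (Sym2 V))).Adj u v :=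
    (SimpleGraph.fromEdgeSet_adj _).mpr ⟨Finset.mem_insert_self _ _, huv⟩
  have hreach : ∀ z, (SimpleGraph.fromEdgeSet (↑B' : Set (Sym2 V))).Reachable u z := by
    intro z
    obtain ⟨p⟩ := htree.isConnected.preconnected x z
    have hor := stableMST_reach_or (u := x) (v := y) p (Or.inl (SimpleGraph.Reachable.refl _))
    rw [stableMST_del_eq] at hor
    rcases hor with h | h
    · exact (hux.mono hmono).trans (h.mono hmono)
    · exact hKuv.reachable.trans ((hvy.mono hmono).trans (h.mono hmono))
  have hconn : (SimpleGraph.fromEdgeSet (↑B' : Set (Sym2 V))).Connected := by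
    have hne : Nonempty V := htree.isConnected.nonempty
    exact SimpleGraph.Connected.mk fun a b => ((hreach a).symm).trans (hreach b)
  apply stableMST_tree_of_connected_card _ hconn
  rw [stableMST_good_ncard hnd', hcard, ← stableMST_good_ncard hnd]
  exact stableMST_tree_ncard htree

private lemma stableMST_strong_exchange (A B : Finset (Sym2 V))
    (hndA : ∀ g ∈ A, ¬g.IsDiag) (hndB : ∀ g ∈ B, ¬g.IsDiag)
    (hAt : (SimpleGraph.fromEdgeSet (↑A : Set (Sym2 V))).IsTree)
    (hBt : (SimpleGraph.fromEdgeSet (↑B : Set (Sym2 V))).IsTree)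
    {e : Sym2 V} (heA : e ∈ A) (heB : e ∉ B) :
    ∃ f ∈ B, f ∉ A ∧ (SimpleGraph.fromEdgeSet (↑(insert f (A.erase e)) : Set (Sym2 V))).IsTree ∧
      (SimpleGraph.fromEdgeSet (↑(insert e (B.erase f)) : Set (Sym2 V))).IsTree := by
  induction e using Sym2.ind with
  | _ u v =>
  have huv : u ≠ v := by simpa [Sym2.mk_isDiag_iff] using hndA _ heA
  set HA := SimpleGraph.fromEdgeSet (↑A : Set (Sym2 V)) with hHA
  set HB := SimpleGraph.fromEdgeSet (↑B : Set (Sym2 V)) with hHB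
  have hAdjA : HA.Adj u v := (SimpleGraph.fromEdgeSet_adj _).mpr ⟨heA, huv⟩
  have hbridge := (SimpleGraph.isAcyclic_iff_forall_adj_isBridge.mp hAt.IsAcyclic) hAdjA
  rw [SimpleGraph.isBridge_iff] at hbridge
  have hnr : ¬ (HA.deleteEdges {s(u,v)}).Reachable u v := hbridge
  set S : Set V := {z | (HA.deleteEdges {s(u,v)}).Reachable u z} with hS
  have huS : u ∈ S := SimpleGraph.Reachable.refl _
  have hvS : v ∉ S := hnr
  obtain ⟨p0⟩ := hBt.isConnected.preconnected u v
  set q : HB.Walk u v := p0.toPath.val with hq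
  have hqp : q.IsPath := p0.toPath.prop
  obtain ⟨d, hd, hdS, hdS'⟩ := q.exists_boundary_dart S huS hvS
  have hdadj : HB.Adj d.fst d.snd := d.adj
  have hdne : d.fst ≠ d.snd := hdadj.ne
  have hfB : s(d.fst, d.snd) ∈ B := ((SimpleGraph.fromEdgeSet_adj _).mp hdadj).1
  have hfA : s(d.fst, d.snd) ∉ A := by
    intro hfA
    have hfe : s(d.fst, d.snd) ≠ s(u,v) := by
      intro hh; rw [hh] at hfB; exact heB hfB
    have hadj' : (HA.deleteEdges {s(u,v)}).Adj d.fst d.snd :=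
      SimpleGraph.deleteEdges_adj.mpr ⟨(SimpleGraph.fromEdgeSet_adj _).mpr ⟨hfA, hdne⟩,
        by simpa using hfe⟩
    exact hdS' (hdS.trans hadj'.reachable)
  have hreachA : ∀ z, (HA.deleteEdges {s(u,v)}).Reachable u z ∨
      (HA.deleteEdges {s(u,v)}).Reachable v z := by
    intro z
    obtain ⟨p⟩ := hAt.isConnected.preconnected u z
    exact stableMST_reach_or p (Or.inl (SimpleGraph.Reachable.refl _))
  have hAx : (SimpleGraph.fromEdgeSet (↑(A.erase s(u,v)) : Set (Sym2 V))).Reachable d.fst u := by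
    rw [← stableMST_del_eq]
    exact hdS.symm
  have hAy : (SimpleGraph.fromEdgeSet (↑(A.erase s(u,v)) : Set (Sym2 V))).Reachable d.snd v := by
    rw [← stableMST_del_eq]
    rcases hreachA d.snd with h | h
    · exact absurd h hdS'
    · exact h.symm
  have hdedge : d.edge = s(d.fst, d.snd) := rfl
  obtain ⟨hB1, hB2⟩ := stableMST_dart_split q hqp.isTrail d hd
  rw [hdedge, stableMST_del_eq] at hB1 hB2
  refine ⟨s(d.fst, d.snd), hfB, hfA, ?_, ?_⟩
  · exact stableMST_swap_tree A hndA hAt hdne hfA heA hAx hAy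
  · exact stableMST_swap_tree B hndB hBt huv heB hfB hB1 hB2.symm

private lemma stableMST_sum_swap (g : Sym2 V → ℝ) {T : Finset (Sym2 V)} {e f : Sym2 V}
    (he : e ∈ T) (hf : f ∉ T) :
    ∑ x ∈ insert f (T.erase e), g x = ∑ x ∈ T, g x - g e + g f := by
  have h1 := Finset.add_sum_erase T g he
  rw [Finset.sum_insert (fun hc => hf (Finset.mem_of_mem_erase hc))]
  linarith

end StableMSTAux

/-- **The stability–fit tradeoff for stable MST is monotone.**
Let `G` be a finite connected graph with edge weights `w`, let `S₀` be the edge set of a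
spanning tree, and for `b ≥ 0` let `w_b e = w e - b` for `e ∈ S₀` and `w_b e = w e`
otherwise.  Then for `0 ≤ a ≤ a'`: an edge `e ∉ S₀` excluded from every minimum
spanning tree w.r.t. `w_a` is excluded from every minimum spanning tree w.r.t. `w_{a'}`,
and an edge `e ∈ S₀` included in every minimum spanning tree w.r.t. `w_a` is included in
every minimum spanning tree w.r.t. `w_{a'}`. -/
theorem stable_mst_monotone {V : Type*} [Fintype V] [DecidableEq V]
    (G : SimpleGraph V) (hG : G.Connected) (w : Sym2 V → ℝ)
    (S₀ : Finset (Sym2 V)) (hS₀sub : (S₀ : Set (Sym2 V)) ⊆ G.edgeSet)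
    (hS₀tree : (SimpleGraph.fromEdgeSet (S₀ : Set (Sym2 V))).IsTree)
    (e : Sym2 V) (a a' : ℝ) (ha : 0 ≤ a) (haa' : a ≤ a') :
    let wa : ℝ → Sym2 V → ℝ := fun b f => w f - (if f ∈ S₀ then b else 0)
    let IsMinST : ℝ → Finset (Sym2 V) → Prop := fun b T =>
      ((T : Set (Sym2 V)) ⊆ G.edgeSet ∧ (SimpleGraph.fromEdgeSet (T : Set (Sym2 V))).IsTree) ∧
      ∀ T' : Finset (Sym2 V),
        ((T' : Set (Sym2 V)) ⊆ G.edgeSet ∧ (SimpleGraph.fromEdgeSet (T' : Set (Sym2 V))).IsTree) →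
        ∑ f ∈ T, wa b f ≤ ∑ f ∈ T', wa b f
    (e ∉ S₀ → (∀ T, IsMinST a T → e ∉ T) → ∀ T, IsMinST a' T → e ∉ T) ∧
    (e ∈ S₀ → (∀ T, IsMinST a T → e ∈ T) → ∀ T, IsMinST a' T → e ∈ T) := by
  classical
  intro wa IsMinST
  have hwa : ∀ b g, wa b g = w g - (if g ∈ S₀ then b else 0) := fun _ _ => rfl
  -- existence of a minimum spanning tree for any parameter
  have hmin : ∀ b : ℝ, ∃ U : Finset (Sym2 V), IsMinST b U := by
    intro b
    set 𝒯 : Finset (Finset (Sym2 V)) :=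
      G.edgeFinset.powerset.filter
        (fun T => (SimpleGraph.fromEdgeSet (↑T : Set (Sym2 V))).IsTree) with h𝒯
    have hmem : ∀ T : Finset (Sym2 V), T ∈ 𝒯 ↔
        ((↑T : Set (Sym2 V)) ⊆ G.edgeSet ∧
          (SimpleGraph.fromEdgeSet (↑T : Set (Sym2 V))).IsTree) := by
      intro T
      rw [h𝒯, Finset.mem_filter, Finset.mem_powerset]
      constructor
      · rintro ⟨h1, h2⟩
        refine ⟨fun g hg => ?_, h2⟩
        exact (SimpleGraph.mem_edgeFinset).mp (h1 hg)
      · rintro ⟨h1, h2⟩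
        refine ⟨fun g hg => ?_, h2⟩
        exact (SimpleGraph.mem_edgeFinset).mpr (h1 hg)
    have hne : 𝒯.Nonempty := ⟨S₀, (hmem S₀).mpr ⟨hS₀sub, hS₀tree⟩⟩
    obtain ⟨U, hU𝒯, hUmin⟩ := Finset.exists_min_image 𝒯 (fun T => ∑ f ∈ T, wa b f) hne
    exact ⟨U, (hmem U).mp hU𝒯, fun T' hT' => hUmin T' ((hmem T').mpr hT')⟩
  constructor
  · -- (i) e ∉ S₀
    intro heS0 hyp T hT heT
    obtain ⟨U, hU⟩ := hmin a
    have heU : e ∉ U := hyp U hU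
    have hndT : ∀ g ∈ T, ¬g.IsDiag := fun g hg => G.not_isDiag_of_mem_edgeSet (hT.1.1 hg)
    have hndU : ∀ g ∈ U, ¬g.IsDiag := fun g hg => G.not_isDiag_of_mem_edgeSet (hU.1.1 hg)
    obtain ⟨f, hfU, hfT, htree1, htree2⟩ :=
      stableMST_strong_exchange T U hndT hndU hT.1.2 hU.1.2 heT heU
    have hT2sub : (↑(insert f (T.erase e)) : Set (Sym2 V)) ⊆ G.edgeSet := by
      intro g hg
      rcases Finset.mem_insert.mp hg with rfl | hg
      · exact hU.1.1 hfU
      · exact hT.1.1 (Finset.mem_of_mem_erase hg)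
    have h1 := hT.2 (insert f (T.erase e)) ⟨hT2sub, htree1⟩
    rw [stableMST_sum_swap (wa a') heT hfT] at h1
    have key : wa a e ≤ wa a f := by
      have h2 : wa a' e ≤ wa a' f := by linarith
      rw [hwa, hwa] at h2 ⊢
      rw [if_neg heS0] at h2 ⊢
      by_cases hfS : f ∈ S₀
      · rw [if_pos hfS] at h2 ⊢; linarith
      · rw [if_neg hfS] at h2 ⊢; linarith
    have hU2sub : (↑(insert e (U.erase f)) : Set (Sym2 V)) ⊆ G.edgeSet := by
      intro g hg
      rcases Finset.mem_insert.mp hg with rfl | hg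
      · exact hT.1.1 heT
      · exact hU.1.1 (Finset.mem_of_mem_erase hg)
    have hU2min : IsMinST a (insert e (U.erase f)) := by
      refine ⟨⟨hU2sub, htree2⟩, fun T'' hT'' => ?_⟩
      rw [stableMST_sum_swap (wa a) hfU heU]
      have := hU.2 T'' hT''
      linarith
    exact (hyp _ hU2min) (Finset.mem_insert_self e _)
  · -- (ii) e ∈ S₀
    intro heS0 hyp T hT
    by_contra heT
    obtain ⟨U, hU⟩ := hmin a
    have heU : e ∈ U := hyp U hU
    have hndT : ∀ g ∈ T, ¬g.IsDiag := fun g hg => G.not_isDiag_of_mem_edgeSet (hT.1.1 hg)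
    have hndU : ∀ g ∈ U, ¬g.IsDiag := fun g hg => G.not_isDiag_of_mem_edgeSet (hU.1.1 hg)
    obtain ⟨f, hfT, hfU, htree1, htree2⟩ :=
      stableMST_strong_exchange U T hndU hndT hU.1.2 hT.1.2 heU heT
    have hT2sub : (↑(insert e (T.erase f)) : Set (Sym2 V)) ⊆ G.edgeSet := by
      intro g hg
      rcases Finset.mem_insert.mp hg with rfl | hg
      · exact hU.1.1 heU
      · exact hT.1.1 (Finset.mem_of_mem_erase hg)
    have h1 := hT.2 (insert e (T.erase f)) ⟨hT2sub, htree2⟩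
    rw [stableMST_sum_swap (wa a') hfT heT] at h1
    have key : wa a f ≤ wa a e := by
      have h2 : wa a' f ≤ wa a' e := by linarith
      rw [hwa, hwa] at h2 ⊢
      rw [if_pos heS0] at h2 ⊢
      by_cases hfS : f ∈ S₀
      · rw [if_pos hfS] at h2 ⊢; linarith
      · rw [if_neg hfS] at h2 ⊢; linarith
    have hU2sub : (↑(insert f (U.erase e)) : Set (Sym2 V)) ⊆ G.edgeSet := by
      intro g hg
      rcases Finset.mem_insert.mp hg with rfl | hg
      · exact hT.1.1 hfT
      · exact hU.1.1 (Finset.mem_of_mem_erase hg)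
    have hU2min : IsMinST a (insert f (U.erase e)) := by
      refine ⟨⟨hU2sub, htree1⟩, fun T'' hT'' => ?_⟩
      rw [stableMST_sum_swap (wa a) heU hfU]
      have := hU.2 T'' hT''
      linarith
    have he2 : e ∈ insert f (U.erase e) := hyp _ hU2min
    rcases Finset.mem_insert.mp he2 with rfl | he2
    · exact hfU heU
    · exact (Finset.notMem_erase e U) he2
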